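/- Let G ≥ 1 and B ≥ 1 be integers, let s_max > 0 be a real number, and let s_1, …, s_{GB} be real numbers in the interval [0, s_max]. Then there exists a partition of {s_1, …, s_{GB}} into G groups S_1, …, S_G of cardinality B each, which minimizes the maximum group load M = max_g ∑_{s ∈ S_g} s over all such partitions and which in addition satisfies ∑_{g=1}^{G} (M − L_g) ≤ (G − 1) s_max, where L_g = ∑_{s ∈ S_g} s. In particular, the minimum over all such partitions of the imbalance ∑_{g=1}^{G} (max_h L_h − L_g) is at most (G − 1) s_max. -/

import Mathlib

open Finset

/-- `f` partitions the `G*B` items into `G` groups, each of cardinality `B`. -/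
def IsBPartition (G B : ℕ) (f : Fin (G * B) → Fin G) : Prop :=
  ∀ g : Fin G, (Finset.univ.filter fun i => f i = g).card = B

/-- The load of group `g`: the sum of the values assigned to it. -/
noncomputable def groupLoad (G B : ℕ) (s : Fin (G * B) → ℝ)
    (f : Fin (G * B) → Fin G) (g : Fin G) : ℝ :=
  ∑ i ∈ Finset.univ.filter (fun i => f i = g), s i

/-- The maximum group load. -/
noncomputable def maxLoad (G B : ℕ) [NeZero G] (s : Fin (G * B) → ℝ)
    (f : Fin (G * B) → Fin G) : ℝ :=
  Finset.univ.sup' ⟨0, Finset.mem_univ 0⟩ (groupLoad G B s f)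

lemma isBPartition_default (G B : ℕ) :
    IsBPartition G B (fun i => (finProdFinEquiv.symm i).1) := by
  intro g
  have h1 : (Finset.univ.filter fun i : Fin (G*B) => (finProdFinEquiv.symm i).1 = g).card
      = (Finset.univ.filter fun p : Fin G × Fin B => p.1 = g).card :=
    Finset.card_equiv finProdFinEquiv.symm (fun i => by simp)
  have h2 : (Finset.univ.filter fun p : Fin G × Fin B => p.1 = g)
      = {g} ×ˢ Finset.univ := by
    ext p
    simp only [Finset.mem_filter, Finset.mem_univ, true_and, Finset.mem_product,
      Finset.mem_singleton, and_true]
  rw [h1, h2]; simp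

lemma partition_comp_perm {G B : ℕ} {f : Fin (G*B) → Fin G} (hf : IsBPartition G B f)
    (σ : Equiv.Perm (Fin (G*B))) : IsBPartition G B (f ∘ σ) := by
  intro g
  exact (Finset.card_equiv σ (fun i => by simp)).trans (hf g)

lemma groupLoad_comp {G B : ℕ} (s : Fin (G*B) → ℝ) (f : Fin (G*B) → Fin G)
    (σ : Equiv.Perm (Fin (G*B))) (g : Fin G) :
    groupLoad G B s (f ∘ σ) g = ∑ j ∈ Finset.univ.filter (fun j => f j = g), s (σ.symm j) := by
  unfold groupLoad
  exact Finset.sum_equiv σ (fun i => by simp) (fun i _ => by simp)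

/-- There exists a partition into `G` groups of size `B` that minimizes the maximum
group load over all such partitions and whose imbalance `∑ g (M − L_g)` is at most
`(G − 1) · s_max`. -/
theorem exists_minimizing_partition_imbalance_le (G B : ℕ) [NeZero G] (hB : 1 ≤ B)
    (smax : ℝ) (hsmax : 0 < smax)
    (s : Fin (G * B) → ℝ) (hs : ∀ i, s i ∈ Set.Icc (0 : ℝ) smax) :
    ∃ f : Fin (G * B) → Fin G, IsBPartition G B f ∧
      (∀ f' : Fin (G * B) → Fin G, IsBPartition G B f' →
        maxLoad G B s f ≤ maxLoad G B s f') ∧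
      ∑ g : Fin G, (maxLoad G B s f - groupLoad G B s f g) ≤ ((G : ℝ) - 1) * smax := by
  classical
  set P : Finset (Fin (G*B) → Fin G) := Finset.univ.filter (fun f => IsBPartition G B f)
    with hPdef
  have hPmem : ∀ f, f ∈ P ↔ IsBPartition G B f := by
    intro f; simp [hPdef]
  have hPne : P.Nonempty := ⟨_, (hPmem _).2 (isBPartition_default G B)⟩
  obtain ⟨f0, hf0P, hf0min⟩ := P.exists_min_image (maxLoad G B s) hPne
  set M := maxLoad G B s f0 with hMdef
  set Q : Finset (Fin (G*B) → Fin G) := P.filter (fun f => maxLoad G B s f = M) with hQdef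
  have hQne : Q.Nonempty := ⟨f0, by simp [hQdef, hf0P]; rfl⟩
  obtain ⟨f, hfQ, hfmin⟩ :=
    Q.exists_min_image (fun f => ∑ g : Fin G, (groupLoad G B s f g)^2) hQne
  have hfP : IsBPartition G B f := (hPmem f).1 (Finset.mem_of_mem_filter _ hfQ)
  have hfM : maxLoad G B s f = M := (Finset.mem_filter.1 hfQ).2
  have hload_le : ∀ g : Fin G, groupLoad G B s f g ≤ M := by
    intro g
    rw [← hfM]
    exact Finset.le_sup' _ (Finset.mem_univ g)
  -- key claim: every load is within smax of M
  have key : ∀ g : Fin G, M - groupLoad G B s f g ≤ smax := by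
    by_contra hcon
    push_neg at hcon
    obtain ⟨g, hg⟩ := hcon
    have hg' : groupLoad G B s f g + smax < M := by linarith
    obtain ⟨h, -, hh⟩ := Finset.exists_mem_eq_sup'
      (⟨0, Finset.mem_univ 0⟩ : (Finset.univ : Finset (Fin G)).Nonempty) (groupLoad G B s f)
    have hLh : groupLoad G B s f h = M := by rw [← hfM]; exact hh.symm
    have hgh : g ≠ h := by
      intro e; rw [e, hLh] at hg'; linarith
    set Th := Finset.univ.filter (fun i => f i = h) with hThdef
    set Tg := Finset.univ.filter (fun i => f i = g) with hTgdef
    have hThne : Th.Nonempty := by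
      rw [← Finset.card_pos, hfP h]; omega
    have hTgne : Tg.Nonempty := by
      rw [← Finset.card_pos, hfP g]; omega
    obtain ⟨i0, hi0, hi0max⟩ := Finset.exists_mem_eq_sup' hThne s
    obtain ⟨j0, hj0, hj0min⟩ := Finset.exists_mem_eq_inf' hTgne s
    have hi0mem : f i0 = h := (Finset.mem_filter.1 hi0).2
    have hj0mem : f j0 = g := (Finset.mem_filter.1 hj0).2
    have hsiub : ∀ i ∈ Th, s i ≤ s i0 := fun i hi => hi0max ▸ Finset.le_sup' s hi
    have hsjlb : ∀ j ∈ Tg, s j0 ≤ s j := fun j hj => hj0min ▸ Finset.inf'_le s hj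
    -- s j0 < s i0
    have hlt : s j0 < s i0 := by
      by_contra hle
      push_neg at hle
      have h1 : groupLoad G B s f h ≤ B * s i0 := by
        have := Finset.sum_le_card_nsmul Th s (s i0) hsiub
        rw [hfP h] at this
        simpa [nsmul_eq_mul, groupLoad, hThdef] using this
      have h2 : (B : ℝ) * s j0 ≤ groupLoad G B s f g := by
        have := Finset.card_nsmul_le_sum Tg s (s j0) hsjlb
        rw [hfP g] at this
        simpa [nsmul_eq_mul, groupLoad, hTgdef] using this
      have hB' : (1 : ℝ) ≤ (B : ℝ) := by exact_mod_cast hB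
      have : (B : ℝ) * s i0 ≤ (B : ℝ) * s j0 :=
        mul_le_mul_of_nonneg_left hle (by linarith)
      rw [hLh] at h1
      linarith
    set d := s i0 - s j0 with hddef
    have hd0 : 0 < d := by simp [hddef]; linarith
    have hdmax : d ≤ smax := by
      have h1 := (hs i0).2
      have h2 := (hs j0).1
      simp only [hddef]; linarith
    have hij : i0 ≠ j0 := by
      intro e; rw [e, hj0mem] at hi0mem; exact hgh hi0mem
    set σ := Equiv.swap i0 j0 with hσdef
    set f' := f ∘ σ with hf'def
    have hf'P : IsBPartition G B f' := partition_comp_perm hfP σ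
    -- loads of f'
    have hload' : ∀ g' : Fin G,
        groupLoad G B s f' g' = ∑ j ∈ Finset.univ.filter (fun j => f j = g'), s (σ j) := by
      intro g'
      rw [hf'def, groupLoad_comp]
      simp [hσdef]
    have hswap_i0 : σ i0 = j0 := Equiv.swap_apply_left _ _
    have hswap_j0 : σ j0 = i0 := Equiv.swap_apply_right _ _
    have hL'h : groupLoad G B s f' h = M - d := by
      rw [hload' h]
      have hj0nm : j0 ∉ Th := by
        intro hmem
        exact hgh ((hj0mem.symm.trans (Finset.mem_filter.1 hmem).2))
      rw [← Finset.add_sum_erase _ _ hi0]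
      have : ∑ j ∈ Th.erase i0, s (σ j) = ∑ j ∈ Th.erase i0, s j := by
        refine Finset.sum_congr rfl (fun j hj => ?_)
        have h1 : j ≠ i0 := Finset.ne_of_mem_erase hj
        have h2 : j ≠ j0 := fun e => hj0nm (e ▸ Finset.mem_of_mem_erase hj)
        rw [hσdef, Equiv.swap_apply_of_ne_of_ne h1 h2]
      rw [this, hswap_i0]
      have := Finset.add_sum_erase _ s hi0
      have hsum : ∑ j ∈ Th, s j = M := by
        rw [← hLh]; rfl
      have herase : ∑ j ∈ Th.erase i0, s j = M - s i0 := by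
        rw [← hsum, ← Finset.add_sum_erase _ s hi0]; ring
      rw [herase, hddef]; ring
    have hL'g : groupLoad G B s f' g = groupLoad G B s f g + d := by
      rw [hload' g]
      have hi0nm : i0 ∉ Tg := by
        intro hmem
        exact hgh ((Finset.mem_filter.1 hmem).2.symm.trans hi0mem)
      rw [← Finset.add_sum_erase _ _ hj0]
      have : ∑ j ∈ Tg.erase j0, s (σ j) = ∑ j ∈ Tg.erase j0, s j := by
        refine Finset.sum_congr rfl (fun j hj => ?_)
        have h2 : j ≠ j0 := Finset.ne_of_mem_erase hj
        have h1 : j ≠ i0 := fun e => hi0nm (e ▸ Finset.mem_of_mem_erase hj)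
        rw [hσdef, Equiv.swap_apply_of_ne_of_ne h1 h2]
      rw [this, hswap_j0]
      have herase : ∑ j ∈ Tg.erase j0, s j = groupLoad G B s f g - s j0 := by
        have hsum : ∑ j ∈ Tg, s j = groupLoad G B s f g := rfl
        rw [← hsum, ← Finset.add_sum_erase _ s hj0]; ring
      rw [herase, hddef]; ring
    have hL'other : ∀ g' : Fin G, g' ≠ g → g' ≠ h →
        groupLoad G B s f' g' = groupLoad G B s f g' := by
      intro g' hgg hgh'
      rw [hload' g']
      refine Finset.sum_congr rfl (fun j hj => ?_)
      have hjmem : f j = g' := (Finset.mem_filter.1 hj).2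
      have h1 : j ≠ i0 := fun e => hgh' (by rw [← hjmem, e, hi0mem])
      have h2 : j ≠ j0 := fun e => hgg (by rw [← hjmem, e, hj0mem])
      rw [hσdef, Equiv.swap_apply_of_ne_of_ne h1 h2]
    -- maxLoad f' ≤ M
    have hmax' : maxLoad G B s f' ≤ M := by
      apply Finset.sup'_le
      intro g' _
      by_cases e1 : g' = g
      · rw [e1, hL'g]; linarith
      · by_cases e2 : g' = h
        · rw [e2, hL'h]; linarith
        · rw [hL'other g' e1 e2]; exact hload_le g'
    have hmax'' : maxLoad G B s f' = M := by
      have : M ≤ maxLoad G B s f' := hf0min f' ((hPmem f').2 hf'P)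
      linarith
    have hf'Q : f' ∈ Q := by
      rw [hQdef, Finset.mem_filter]
      exact ⟨(hPmem f').2 hf'P, hmax''⟩
    have hle := hfmin f' hf'Q
    -- but sum of squares strictly decreases
    have hsq : ∑ g' : Fin G, (groupLoad G B s f' g')^2
        < ∑ g' : Fin G, (groupLoad G B s f g')^2 := by
      have hdiff : ∑ g' : Fin G, ((groupLoad G B s f' g')^2 - (groupLoad G B s f g')^2)
          = ((groupLoad G B s f' g)^2 - (groupLoad G B s f g)^2)
            + ((groupLoad G B s f' h)^2 - (groupLoad G B s f h)^2) := by
        rw [← Finset.sum_pair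
          (f := fun x => (groupLoad G B s f' x)^2 - (groupLoad G B s f x)^2) hgh]
        refine (Finset.sum_subset (Finset.subset_univ _) ?_).symm
        intro x _ hx
        simp only [Finset.mem_insert, Finset.mem_singleton, not_or] at hx
        rw [hL'other x hx.1 hx.2]; ring
      rw [Finset.sum_sub_distrib] at hdiff
      have hneg : ((groupLoad G B s f' g)^2 - (groupLoad G B s f g)^2)
          + ((groupLoad G B s f' h)^2 - (groupLoad G B s f h)^2) < 0 := by
        rw [hL'g, hL'h, hLh]
        nlinarith [hg', hd0, hdmax]
      linarith
    linarith
  -- conclude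
  refine ⟨f, hfP, ?_, ?_⟩
  · intro f' hf'
    rw [hfM]
    exact hf0min f' ((hPmem f').2 hf')
  · obtain ⟨h, -, hh⟩ := Finset.exists_mem_eq_sup'
      (⟨0, Finset.mem_univ 0⟩ : (Finset.univ : Finset (Fin G)).Nonempty) (groupLoad G B s f)
    have hLh : groupLoad G B s f h = M := by rw [← hfM]; exact hh.symm
    rw [hfM]
    have hsplit : ∑ g : Fin G, (M - groupLoad G B s f g)
        = (M - groupLoad G B s f h) + ∑ g ∈ Finset.univ.erase h, (M - groupLoad G B s f g) :=
      (Finset.add_sum_erase _ _ (Finset.mem_univ h)).symm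
    have hzero : M - groupLoad G B s f h = 0 := by rw [hLh]; ring
    have hbound : ∑ g ∈ Finset.univ.erase h, (M - groupLoad G B s f g)
        ≤ (Finset.univ.erase h).card • smax :=
      Finset.sum_le_card_nsmul _ _ _ (fun g _ => key g)
    have hcard : (Finset.univ.erase h).card = G - 1 := by
      rw [Finset.card_erase_of_mem (Finset.mem_univ h), Finset.card_univ, Fintype.card_fin]
    have hG1 : 1 ≤ G := Nat.one_le_iff_ne_zero.2 (NeZero.ne G)
    have hcast : ((G - 1 : ℕ) : ℝ) = (G : ℝ) - 1 := by
      rw [Nat.cast_sub hG1]; norm_num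
    rw [hsplit, hzero, zero_add]
    calc ∑ g ∈ Finset.univ.erase h, (M - groupLoad G B s f g)
        ≤ (Finset.univ.erase h).card • smax := hbound
      _ = ((G : ℝ) - 1) * smax := by rw [hcard, nsmul_eq_mul, hcast]
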